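/- In the setting of an S-Hilbert B-module 𝓔 with finite idempotent set E, the diagonal projection 𝔻 = ∑_{χ ∈ X} P_χ ⊗ P_χ on the algebraic tensor product 𝓔 ⊗ 𝓕 of two S-Hilbert modules (with P_χ formed from the respective E-actions) commutes with the diagonal operators U_s ⊗ V_s for every s ∈ S. -/

import Mathlib

open TensorProduct

/-- The set `X` of unital semilattice characters on the idempotents of `S`, encoded as
maps `χ : S → Bool` which are multiplicative on idempotents and unital. -/
abbrev IdemChar (S : Type*) [Monoid S] : Type _ :=
  {χ : S → Bool //
    (∀ e f : S, e * e = e → f * f = f → χ (e * f) = (χ e && χ f)) ∧ χ 1 = true}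

/-- The minimal projection `P_χ = ∏_{χ(e)=1} U_e · ∏_{χ(f)=0} (1 - U_f)` built from
the `E`-part of an `S`-action `U` by linear operators. -/
noncomputable def Pend {S : Type*} [Monoid S] [Fintype S] [DecidableEq S]
    {𝓔 : Type*} [AddCommGroup 𝓔] [Module ℂ 𝓔]
    (U : S → Module.End ℂ 𝓔) (χ : S → Bool) : Module.End ℂ 𝓔 :=
  ((Finset.univ : Finset {e : S // e * e = e}).toList.map
    (fun e => if χ e.1 then U e.1 else 1 - U e.1)).prod

/-- The diagonal projection `𝔻 = ∑_{χ ∈ X} P_χ ⊗ P_χ` on the algebraic tensor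
product `𝓔 ⊗ 𝓕`. -/
noncomputable def Dop {S : Type*} [Monoid S] [Fintype S] [DecidableEq S]
    {𝓔 𝓕 : Type*} [AddCommGroup 𝓔] [Module ℂ 𝓔] [AddCommGroup 𝓕] [Module ℂ 𝓕]
    (U : S → Module.End ℂ 𝓔) (V : S → Module.End ℂ 𝓕) :
    𝓔 ⊗[ℂ] 𝓕 →ₗ[ℂ] 𝓔 ⊗[ℂ] 𝓕 :=
  ∑ χ : IdemChar S, TensorProduct.map (Pend U χ.1) (Pend V χ.1)

set_option linter.unusedVariables false
set_option linter.unreachableTactic false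
set_option linter.unusedTactic false
set_option linter.unusedSectionVars false

section Semi
variable {S : Type*} [Monoid S]

/-- In a monoid with unique pseudo-inverses, idempotents commute. -/
theorem idem_comm (inv : S → S)
    (h1 : ∀ s, s * inv s * s = s) (h2 : ∀ s, inv s * s * inv s = inv s)
    (huniq : ∀ s t, s * t * s = s → t * s * t = t → t = inv s)
    {e f : S} (he : e * e = e) (hf : f * f = f) : e * f = f * e := by
  -- product of two idempotents is idempotent
  have key : ∀ x y : S, x * x = x → y * y = y → (x * y) * (x * y) = x * y := by
    intro x y hx hy
    have hx' : ∀ t, x * (x * t) = x * t := fun t => by rw [← mul_assoc, hx]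
    have hy' : ∀ t, y * (y * t) = y * t := fun t => by rw [← mul_assoc, hy]
    set z := inv (x * y) with hz
    have hz1 : (x * y) * z * (x * y) = x * y := h1 _
    have hz2 : z * (x * y) * z = z := h2 _
    have p1 : (x * y) * (y * z * x) * (x * y) = x * y := by
      have : (x * y) * (y * z * x) * (x * y) = x * ((y * (y * (z * (x * (x * y))))))  := by
        simp only [mul_assoc]
      rw [this, hx', hy']
      have : x * (y * (z * (x * y))) = (x * y) * z * (x * y) := by simp only [mul_assoc]
      rw [this, hz1]
    have p2 : (y * z * x) * (x * y) * (y * z * x) = y * z * x := by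
      have : (y * z * x) * (x * y) * (y * z * x) = y * (z * (x * (x * (y * (y * (z * x)))))) := by
        simp only [mul_assoc]
      rw [this, hx', hy']
      have h3 : y * (z * (x * (y * (z * x)))) = y * ((z * (x * y) * z) * x) := by
        simp only [mul_assoc]
      rw [h3, hz2]
      simp only [mul_assoc]
    have step1 : y * z * x = z := huniq _ _ p1 p2
    have step2 : z * z = z := by
      calc z * z = (y * z * x) * (y * z * x) := by rw [step1]
        _ = y * ((z * (x * y) * z) * x) := by simp only [mul_assoc]
        _ = y * (z * x) := by rw [hz2]
        _ = z := by rw [← mul_assoc, step1]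
    -- x * y = z
    have hxyz : x * y = z := by
      have hzzz : z * z * z = z := by rw [step2, step2]
      have hze : z = inv z := huniq z z hzzz hzzz
      have hxy : x * y = inv z := huniq z (x * y) hz2 hz1
      rw [hxy, ← hze]
    rw [hxyz, step2]
  have hef : (e * f) * (e * f) = e * f := key e f he hf
  have hfe : (f * e) * (f * e) = f * e := key f e hf he
  have hinv : ∀ x : S, x * x = x → x = inv x := fun x hx =>
    huniq x x (by rw [hx, hx]) (by rw [hx, hx])
  have h1' : (e * f) * (f * e) * (e * f) = e * f := by
    have : (e * f) * (f * e) * (e * f) = e * ((f * (f * (e * (e * f)))))  := by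
      simp only [mul_assoc]
    rw [this, ← mul_assoc f f, hf, ← mul_assoc e e, he]
    simp only [mul_assoc] at hef ⊢
    exact hef
  have h2' : (f * e) * (e * f) * (f * e) = f * e := by
    have : (f * e) * (e * f) * (f * e) = f * ((e * (e * (f * (f * e)))))  := by
      simp only [mul_assoc]
    rw [this, ← mul_assoc e e, he, ← mul_assoc f f, hf]
    simp only [mul_assoc] at hfe ⊢
    exact hfe
  have : f * e = inv (e * f) := huniq _ _ h1' h2'
  rw [this, ← hinv _ hef]

end Semi

section Mod
variable {S : Type*} [Monoid S] [Fintype S] [DecidableEq S]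
variable {𝓔 : Type*} [AddCommGroup 𝓔] [Module ℂ 𝓔]

/-- The subalgebra generated by the idempotent operators. -/
@[reducible]
noncomputable def adjA (U : S → Module.End ℂ 𝓔) : Subalgebra ℂ (Module.End ℂ 𝓔) :=
  Algebra.adjoin ℂ (Set.range fun e : {e : S // e * e = e} => U e.1)

/-- It is commutative. -/
@[reducible]
noncomputable def adjCR (U : S → Module.End ℂ 𝓔)
    (hU : ∀ s t : S, U (s * t) = U s * U t)
    (hc : ∀ e f : S, e * e = e → f * f = f → e * f = f * e) :
    CommRing (adjA U) :=
  Algebra.adjoinCommRingOfComm ℂ (by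
    rintro _ ⟨e, rfl⟩ _ ⟨f, rfl⟩
    rw [← hU, ← hU, hc e.1 f.1 e.2 f.2])

noncomputable def uu (U : S → Module.End ℂ 𝓔) (e : {e : S // e * e = e}) : adjA U :=
  ⟨U e.1, Algebra.subset_adjoin ⟨e, rfl⟩⟩

lemma bridge (U : S → Module.End ℂ 𝓔)
    (hU : ∀ s t : S, U (s * t) = U s * U t)
    (hc : ∀ e f : S, e * e = e → f * f = f → e * f = f * e)
    (fA : {e : S // e * e = e} → adjA U) :
    letI := adjCR U hU hc
    ((Finset.univ.toList.map fun e => (fA e : Module.End ℂ 𝓔)).prod)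
      = ↑(∏ e, fA e) := by
  letI := adjCR U hU hc
  have h1 : ((adjA U).val : adjA U →ₐ[ℂ] Module.End ℂ 𝓔) ((Finset.univ.toList.map fA).prod)
      = ((Finset.univ.toList.map fA).map (adjA U).val).prod :=
    map_list_prod ((adjA U).val) _
  calc (Finset.univ.toList.map fun e => (fA e : Module.End ℂ 𝓔)).prod
      = (adjA U).val ((Finset.univ.toList.map fA).prod) := by rw [h1, List.map_map]; rfl
    _ = ↑(∏ e, fA e) := congrArg _ (Finset.prod_map_toList _ _)

end Mod

section Mod2
variable {S : Type*} [Monoid S] [Fintype S] [DecidableEq S]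
variable {𝓔 : Type*} [AddCommGroup 𝓔] [Module ℂ 𝓔]
variable (U : S → Module.End ℂ 𝓔)

lemma pend_eq (hU : ∀ s t : S, U (s * t) = U s * U t)
    (hc : ∀ e f : S, e * e = e → f * f = f → e * f = f * e) (χ : S → Bool) :
    letI := adjCR U hU hc
    Pend U χ = ↑(∏ e : {e : S // e * e = e}, if χ e.1 then uu U e else 1 - uu U e) := by
  letI := adjCR U hU hc
  have hb := bridge U hU hc (fun e => if χ e.1 then uu U e else 1 - uu U e)
  have hfun : (fun e : {e : S // e * e = e} => if χ e.1 then U e.1 else 1 - U e.1)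
      = fun e => ((if χ e.1 then uu U e else 1 - uu U e : adjA U) : Module.End ℂ 𝓔) := by
    funext e; by_cases h : χ e.1 <;> simp [h, uu]
  rw [Pend, hfun, hb]

lemma pend_mul_idem (hU : ∀ s t : S, U (s * t) = U s * U t)
    (hc : ∀ e f : S, e * e = e → f * f = f → e * f = f * e) (χ : S → Bool) {e : S} (he : e * e = e) :
    Pend U χ * U e = if χ e then Pend U χ else 0 := by
  letI := adjCR U hU hc
  rw [pend_eq U hU hc χ]
  set fA : {e : S // e * e = e} → adjA U := fun f => if χ f.1 then uu U f else 1 - uu U f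
    with hfA
  have hmem : (⟨e, he⟩ : {e : S // e * e = e}) ∈ Finset.univ := Finset.mem_univ _
  have key : (∏ f, fA f) * uu U ⟨e, he⟩ = if χ e then (∏ f, fA f) else 0 := by
    rw [← Finset.prod_erase_mul _ _ hmem, mul_assoc]
    have h2 : fA ⟨e, he⟩ * uu U ⟨e, he⟩ = if χ e then fA ⟨e, he⟩ else 0 := by
      by_cases h : χ e
      · simp only [hfA, h, if_true]
        exact Subtype.ext (by simp [uu, ← hU, he])
      · simp only [hfA, h, if_false]
        exact Subtype.ext (by simp [uu, ← hU, he, sub_mul])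
    rw [h2]
    by_cases h : χ e
    · rw [if_pos h, if_pos h, Finset.prod_erase_mul _ _ hmem]
    · rw [if_neg h, if_neg h, mul_zero]
  have hcoe : (↑((∏ f, fA f) * uu U ⟨e, he⟩) : Module.End ℂ 𝓔) = ↑(∏ f, fA f) * U e := rfl
  rw [← hcoe, key]
  by_cases h : χ e <;> simp [h]

lemma idem_mul_pend (hU : ∀ s t : S, U (s * t) = U s * U t)
    (hc : ∀ e f : S, e * e = e → f * f = f → e * f = f * e) (χ : S → Bool) {e : S} (he : e * e = e) :
    U e * Pend U χ = if χ e then Pend U χ else 0 := by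
  letI := adjCR U hU hc
  have hcomm : U e * Pend U χ = Pend U χ * U e := by
    rw [pend_eq U hU hc χ]
    have h1 : U e * ↑(∏ f : {e : S // e * e = e},
        if χ f.1 then uu U f else 1 - uu U f) = ↑(uu U ⟨e, he⟩ * ∏ f : {e : S // e * e = e},
        if χ f.1 then uu U f else 1 - uu U f) := rfl
    have h2 : (↑(∏ f : {e : S // e * e = e},
        if χ f.1 then uu U f else 1 - uu U f) : Module.End ℂ 𝓔) * U e
        = ↑((∏ f : {e : S // e * e = e},
        if χ f.1 then uu U f else 1 - uu U f) * uu U ⟨e, he⟩) := rfl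
    rw [h1, h2, mul_comm]
  rw [hcomm, pend_mul_idem U hU hc χ he]

end Mod2

section SIdent
variable {S : Type*} [Monoid S]
variable {a b : S}

lemma sand_ba (hba : b * a * b = b) : (b * a) * (b * a) = b * a := by rw [← mul_assoc, hba]

lemma sand_ab (hab : a * b * a = a) : (a * b) * (a * b) = a * b := by rw [← mul_assoc, hab]

/-- σ e = a e b is idempotent. -/
lemma sand_sigma (hc : ∀ e f : S, e * e = e → f * f = f → e * f = f * e)
    (hba : b * a * b = b) {e : S} (he : e * e = e) : (a * e * b) * (a * e * b) = a * e * b := by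
  have h1 : ∀ t, b * (a * (e * t)) = e * (b * (a * t)) := by
    intro t
    calc b * (a * (e * t)) = ((b * a) * e) * t := by simp only [mul_assoc]
      _ = (e * (b * a)) * t := by rw [(hc e (b * a) he (sand_ba hba)).symm]
      _ = e * (b * (a * t)) := by simp only [mul_assoc]
  have h2 : e * (e * (b * (a * b))) = e * (b * (a * b)) := by rw [← mul_assoc, he]
  have h3 : b * (a * b) = b := by rw [← mul_assoc, hba]
  calc (a * e * b) * (a * e * b) = a * (e * (b * (a * (e * b)))) := by simp only [mul_assoc]
    _ = a * (e * (e * (b * (a * b)))) := by rw [h1]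
    _ = a * (e * (b * (a * b))) := by rw [h2]
    _ = a * (e * b) := by rw [h3]
    _ = a * e * b := by rw [← mul_assoc]

/-- τ (σ e) = e · (b·a). -/
lemma sand_tausigma (hc : ∀ e f : S, e * e = e → f * f = f → e * f = f * e)
    (hba : b * a * b = b) {e : S} (he : e * e = e) : b * (a * e * b) * a = e * (b * a) := by
  have h1 : b * (a * e * b) * a = ((b * a) * e) * ((b * a)) := by simp only [mul_assoc]
  rw [h1, ← hc e (b * a) he (sand_ba hba), mul_assoc, sand_ba hba]

/-- (a·b) · (h · (a·b)) = h · (a·b). -/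
lemma sand_g_hg (hc : ∀ e f : S, e * e = e → f * f = f → e * f = f * e)
    (hab : a * b * a = a) {h : S} (hh : h * h = h) : (a * b) * (h * (a * b)) = h * (a * b) := by
  rw [← mul_assoc, hc (a*b) h (sand_ab hab) hh, mul_assoc, sand_ab hab]

/-- h · (a·b) is idempotent for idempotent h. -/
lemma sand_hg (hc : ∀ e f : S, e * e = e → f * f = f → e * f = f * e)
    (hab : a * b * a = a) {h : S} (hh : h * h = h) : (h * (a * b)) * (h * (a * b)) = h * (a * b) := by
  rw [mul_assoc, sand_g_hg hc hab hh, ← mul_assoc, hh]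

/-- (h · (a·b)) · (a·b) = h · (a·b). -/
lemma sand_hg_g (hab : a * b * a = a) {h : S} (hh : h * h = h) : (h * (a * b)) * (a * b) = h * (a * b) := by
  rw [mul_assoc, sand_ab hab]

/-- b · (σ (τ f)) · a = b · f · a. -/
lemma sand_stf (hab : a * b * a = a) (hba : b * a * b = b) {f : S} : b * (a * (b * f * a) * b) * a = b * f * a := by
  have : b * (a * (b * f * a) * b) * a = ((b * a) * b) * (f * (((a * b) * a))) := by
    simp only [mul_assoc]
  rw [this, hba, hab, ← mul_assoc] <;> try rfl

/-- (σ (τ f)) · (a·b) = f · (a·b). -/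
lemma sand_stf_g (hc : ∀ e f : S, e * e = e → f * f = f → e * f = f * e)
    (hab : a * b * a = a) {f : S} (hf : f * f = f) :
    (a * (b * f * a) * b) * (a * b) = f * (a * b) := by
  have h1 : (a * (b * f * a) * b) * (a * b) = ((a * b) * (f * (a*b))) * (a * b) := by
    simp only [mul_assoc]
  rw [h1, sand_g_hg hc hab hf, mul_assoc, sand_ab hab]

end SIdent

/-- Product of idempotents equals product over the image set. -/
lemma prod_image_idem {M : Type*} [CommMonoid M] [DecidableEq M] {I : Type*}
    (s : Finset I) (F : I → M) (hF : ∀ i, F i * F i = F i) :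
    s.prod F = (s.image F).prod id := by
  classical
  induction s using Finset.induction_on with
  | empty => simp
  | insert _ _ ha ih =>
    rename_i x t
    rw [Finset.prod_insert ha, Finset.image_insert, ih]
    by_cases hmem : F x ∈ t.image F
    · rw [Finset.insert_eq_self.2 hmem]
      rw [← Finset.mul_prod_erase _ id hmem, ← mul_assoc]
      show F x * F x * _ = F x * _
      rw [hF x]
    · rw [Finset.prod_insert hmem]
      simp only [id]

section Core
variable {S : Type*} [Monoid S] [Fintype S] [DecidableEq S]
variable {𝓔 : Type*} [AddCommGroup 𝓔] [Module ℂ 𝓔]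

lemma core (U : S → Module.End ℂ 𝓔)
    (hU : ∀ s t : S, U (s * t) = U s * U t)
    (hc : ∀ e f : S, e * e = e → f * f = f → e * f = f * e)
    (a b : S) (hab : a * b * a = a) (hba : b * a * b = b)
    (χ : S → Bool) (hm : ∀ e f : S, e * e = e → f * f = f → χ (e * f) = (χ e && χ f))
    (hba1 : χ (b * a) = true) :
    ((Finset.univ.toList.map (fun e : {e : S // e * e = e} =>
        if χ e.1 then U (a * e.1 * b) else 1 - U (a * e.1 * b))).prod) * U (a * b)
      = Pend U (fun t => if t * t = t then χ (b * t * a) else χ t) * U (a * b) := by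
  classical
  letI := adjCR U hU hc
  haveI : Nonempty {e : S // e * e = e} := ⟨⟨1, one_mul 1⟩⟩
  set g : {e : S // e * e = e} := ⟨a * b, sand_ab hab⟩ with hgdef
  set σ : {e : S // e * e = e} → {e : S // e * e = e} :=
    fun e => ⟨a * e.1 * b, sand_sigma hc hba e.2⟩ with hσdef
  set hg : {e : S // e * e = e} → {e : S // e * e = e} :=
    fun h => ⟨h.1 * (a * b), sand_hg hc hab h.2⟩ with hhgdef
  set τ : {e : S // e * e = e} → {e : S // e * e = e} :=
    fun f => ⟨b * f.1 * a, sand_sigma (a := b) (b := a) hc hab f.2⟩ with hτdef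
  set cA : {e : S // e * e = e} → adjA U :=
    fun e => if χ e.1 then uu U (σ e) else 1 - uu U (σ e) with hcAdef
  set dA : {e : S // e * e = e} → adjA U :=
    fun f => if χ (b * f.1 * a) then uu U f else 1 - uu U f with hdAdef
  set F : {e : S // e * e = e} → adjA U :=
    fun h => if χ (b * h.1 * a) then uu U (hg h) else uu U g - uu U (hg h) with hFdef
  have hL : ((Finset.univ.toList.map (fun e : {e : S // e * e = e} =>
      if χ e.1 then U (a * e.1 * b) else 1 - U (a * e.1 * b))).prod)
      = ↑(∏ e, cA e) := by
    have hfun : (fun e : {e : S // e * e = e} =>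
        if χ e.1 then U (a * e.1 * b) else 1 - U (a * e.1 * b))
        = fun e => ((cA e : Module.End ℂ 𝓔)) := by
      funext e
      by_cases h : χ e.1 <;> simp [hcAdef, h, uu, hσdef]
    rw [hfun, bridge U hU hc cA]
  have hR : Pend U (fun t => if t * t = t then χ (b * t * a) else χ t) = ↑(∏ f, dA f) := by
    rw [pend_eq U hU hc]
    congr 1
    apply Finset.prod_congr rfl
    intro f _
    rw [show (if f.1 * f.1 = f.1 then χ (b * f.1 * a) else χ f.1) = χ (b * f.1 * a)
      from if_pos f.2]
  have hgidem : uu U g * uu U g = uu U g :=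
    Subtype.ext (by simp only [uu, MulMemClass.coe_mul, ← hU, hgdef]; rw [sand_ab hab])
  have hpow : (uu U g) ^ (Finset.univ : Finset {e : S // e * e = e}).card = uu U g := by
    rw [Finset.card_univ]
    obtain ⟨n, hn⟩ : ∃ n, Fintype.card {e : S // e * e = e} = n + 1 :=
      ⟨Fintype.card {e : S // e * e = e} - 1,
        (Nat.succ_pred_eq_of_pos Fintype.card_pos).symm⟩
    rw [hn]
    exact IsIdempotentElem.pow_succ_eq n hgidem
  have hdist : ∀ (w : {e : S // e * e = e} → adjA U),
      (∏ e, w e) * uu U g = ∏ e, (w e * uu U g) := by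
    intro w
    rw [Finset.prod_mul_distrib, Finset.prod_const, hpow]
  have hsign : ∀ e : {e : S // e * e = e}, χ (b * (σ e).1 * a) = χ e.1 := by
    intro e
    show χ (b * (a * e.1 * b) * a) = χ e.1
    rw [sand_tausigma hc hba e.2, hm e.1 (b * a) e.2 (sand_ba hba), hba1, Bool.and_true]
  have hstep2 : ∀ e : {e : S // e * e = e}, cA e * uu U g = F (σ e) := by
    intro e
    simp only [hcAdef, hFdef, hsign e]
    by_cases h : χ e.1
    · rw [if_pos h, if_pos h]
      exact Subtype.ext (by simp only [uu, MulMemClass.coe_mul, ← hU, hσdef, hhgdef, hgdef])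
    · rw [if_neg h, if_neg h]
      refine Subtype.ext ?_
      show (1 - U (σ e).1) * U g.1 = U g.1 - U ((hg (σ e)).1)
      rw [sub_mul, one_mul, ← hU]
  have hstep3 : ∀ f : {e : S // e * e = e}, dA f * uu U g = F f := by
    intro f
    simp only [hdAdef, hFdef]
    by_cases h : χ (b * f.1 * a)
    · rw [if_pos h, if_pos h]
      exact Subtype.ext (by simp only [uu, MulMemClass.coe_mul, ← hU, hhgdef, hgdef])
    · rw [if_neg h, if_neg h]
      refine Subtype.ext ?_
      show (1 - U f.1) * U g.1 = U g.1 - U ((hg f).1)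
      rw [sub_mul, one_mul, ← hU]
  have hFidem : ∀ h : {e : S // e * e = e}, F h * F h = F h := by
    intro h
    have e2 : uu U (hg h) * uu U (hg h) = uu U (hg h) :=
      Subtype.ext (by
        show U ((hg h).1) * U ((hg h).1) = U ((hg h).1)
        rw [← hU]
        exact congrArg U (sand_hg hc hab h.2))
    have e3 : uu U g * uu U (hg h) = uu U (hg h) :=
      Subtype.ext (by
        show U g.1 * U ((hg h).1) = U ((hg h).1)
        rw [← hU]
        exact congrArg U (sand_g_hg hc hab h.2))
    have e4 : uu U (hg h) * uu U g = uu U (hg h) :=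
      Subtype.ext (by
        show U ((hg h).1) * U g.1 = U ((hg h).1)
        rw [← hU]
        exact congrArg U (sand_hg_g hab h.2))
    by_cases hx : χ (b * h.1 * a)
    · simp only [hFdef, if_pos hx]
      exact e2
    · simp only [hFdef, if_neg hx]
      calc (uu U g - uu U (hg h)) * (uu U g - uu U (hg h))
          = uu U g * uu U g - uu U g * uu U (hg h)
            - (uu U (hg h) * uu U g - uu U (hg h) * uu U (hg h)) := by
            rw [sub_mul, mul_sub, mul_sub]
        _ = uu U g - uu U (hg h) := by rw [hgidem, e2, e3, e4, sub_self, sub_zero]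
  have hFστ : ∀ f : {e : S // e * e = e}, F (σ (τ f)) = F f := by
    intro f
    simp only [hFdef]
    have hs : b * (σ (τ f)).1 * a = b * f.1 * a := sand_stf hab hba
    have hv : uu U (hg (σ (τ f))) = uu U (hg f) := Subtype.ext (by
      show U ((a * (b * f.1 * a) * b) * (a * b)) = U (f.1 * (a * b))
      rw [sand_stf_g hc hab f.2])
    rw [hs, hv]
  have himg : (Finset.univ.image (fun e => F (σ e))) = Finset.univ.image F := by
    apply Finset.Subset.antisymm
    · intro v hv
      rw [Finset.mem_image] at *
      obtain ⟨e, _, he⟩ := hv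
      exact ⟨σ e, Finset.mem_univ _, he⟩
    · intro v hv
      rw [Finset.mem_image] at *
      obtain ⟨f, _, hf⟩ := hv
      exact ⟨τ f, Finset.mem_univ _, by rw [hFστ f]; exact hf⟩
  have main : (∏ e, cA e) * uu U g = (∏ f, dA f) * uu U g := by
    rw [hdist cA, hdist dA]
    calc ∏ e, (cA e * uu U g) = ∏ e, F (σ e) := Finset.prod_congr rfl (fun e _ => hstep2 e)
      _ = (Finset.univ.image (fun e => F (σ e))).prod id :=
          prod_image_idem _ _ (fun e => hFidem _)
      _ = (Finset.univ.image F).prod id := by rw [himg]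
      _ = ∏ f, F f := (prod_image_idem _ _ hFidem).symm
      _ = ∏ f, (dA f * uu U g) := Finset.prod_congr rfl (fun f _ => (hstep3 f).symm)
  rw [hL, hR]
  calc (↑(∏ e, cA e) : Module.End ℂ 𝓔) * U (a * b) = ↑((∏ e, cA e) * uu U g) := rfl
    _ = ↑((∏ f, dA f) * uu U g) := congrArg _ main
    _ = ↑(∏ f, dA f) * U (a * b) := rfl

end Core

lemma mul_list_prod_map {R : Type*} [Monoid R] {I : Type*} (W : R) (f h : I → R)
    (hfh : ∀ i, W * f i = h i * W) : ∀ l : List I, W * (l.map f).prod = (l.map h).prod * W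
  | [] => by simp
  | (x :: l) => by
    rw [List.map_cons, List.prod_cons, List.map_cons, List.prod_cons, ← mul_assoc, hfh,
      mul_assoc, mul_list_prod_map W f h hfh l, ← mul_assoc]

lemma list_prod_map_mul {R : Type*} [Monoid R] {I : Type*} (W : R) (f h : I → R)
    (hfh : ∀ i, f i * W = W * h i) : ∀ l : List I, (l.map f).prod * W = W * (l.map h).prod
  | [] => by simp
  | (x :: l) => by
    rw [List.map_cons, List.prod_cons, List.map_cons, List.prod_cons, mul_assoc,
      list_prod_map_mul W f h hfh l, ← mul_assoc, hfh, mul_assoc]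

section Push
variable {S : Type*} [Monoid S] [Fintype S] [DecidableEq S]
variable {𝓔 : Type*} [AddCommGroup 𝓔] [Module ℂ 𝓔]

lemma key_push (U : S → Module.End ℂ 𝓔)
    (hU : ∀ s t : S, U (s * t) = U s * U t)
    (hc : ∀ e f : S, e * e = e → f * f = f → e * f = f * e)
    (a b : S) (hab : a * b * a = a) (hba : b * a * b = b)
    (χ : S → Bool) (hm : ∀ e f : S, e * e = e → f * f = f → χ (e * f) = (χ e && χ f)) :
    U a * Pend U χ
      = (if χ (b * a) then Pend U (fun t => if t * t = t then χ (b * t * a) else χ t) else 0)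
          * U a := by
  classical
  have hpush : ∀ e : {e : S // e * e = e},
      U a * (if χ e.1 then U e.1 else 1 - U e.1)
        = (if χ e.1 then U (a * e.1 * b) else 1 - U (a * e.1 * b)) * U a := by
    intro e
    have habs : (a * e.1 * b) * a = a * e.1 := by
      calc (a * e.1 * b) * a = a * (e.1 * (b * a)) := by simp only [mul_assoc]
        _ = a * ((b * a) * e.1) := by rw [hc e.1 (b * a) e.2 (sand_ba hba)]
        _ = a * e.1 := by rw [← mul_assoc, ← mul_assoc, hab]
    by_cases h : χ e.1
    · rw [if_pos h, if_pos h, ← hU, ← hU, habs]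
    · rw [if_neg h, if_neg h, mul_sub, mul_one, sub_mul, one_mul, ← hU, ← hU, habs]
  have hmain : U a * Pend U χ
      = ((Finset.univ.toList.map (fun e : {e : S // e * e = e} =>
          if χ e.1 then U (a * e.1 * b) else 1 - U (a * e.1 * b))).prod) * U a := by
    rw [Pend]
    exact mul_list_prod_map _ _ _ hpush _
  by_cases hx : χ (b * a)
  · rw [if_pos hx]
    have h1 := core U hU hc a b hab hba χ hm hx
    have h2 : U (a * b) * U a = U a := by rw [← hU, hab]
    rw [hmain]
    calc ((Finset.univ.toList.map (fun e : {e : S // e * e = e} =>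
          if χ e.1 then U (a * e.1 * b) else 1 - U (a * e.1 * b))).prod) * U a
        = ((Finset.univ.toList.map (fun e : {e : S // e * e = e} =>
          if χ e.1 then U (a * e.1 * b) else 1 - U (a * e.1 * b))).prod) * (U (a * b) * U a) := by
          rw [h2]
      _ = (((Finset.univ.toList.map (fun e : {e : S // e * e = e} =>
          if χ e.1 then U (a * e.1 * b) else 1 - U (a * e.1 * b))).prod) * U (a * b)) * U a := by
          rw [mul_assoc]
      _ = (Pend U (fun t => if t * t = t then χ (b * t * a) else χ t) * U (a * b)) * U a := by
          rw [h1]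
      _ = Pend U (fun t => if t * t = t then χ (b * t * a) else χ t) * (U (a * b) * U a) := by
          rw [mul_assoc]
      _ = Pend U (fun t => if t * t = t then χ (b * t * a) else χ t) * U a := by rw [h2]
  · rw [if_neg hx, zero_mul]
    have h3 : U a * U (b * a) = U a := by rw [← hU, ← mul_assoc, hab]
    calc U a * Pend U χ = (U a * U (b * a)) * Pend U χ := by rw [h3]
      _ = U a * (U (b * a) * Pend U χ) := by rw [mul_assoc]
      _ = U a * (if χ (b * a) then Pend U χ else 0) := by
          rw [idem_mul_pend U hU hc χ (sand_ba hba)]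
      _ = 0 := by rw [if_neg hx, mul_zero]

lemma key_push' (U : S → Module.End ℂ 𝓔)
    (hU : ∀ s t : S, U (s * t) = U s * U t)
    (hc : ∀ e f : S, e * e = e → f * f = f → e * f = f * e)
    (a b : S) (hab : a * b * a = a) (hba : b * a * b = b)
    (χ : S → Bool) (hm : ∀ e f : S, e * e = e → f * f = f → χ (e * f) = (χ e && χ f)) :
    Pend U χ * U a
      = U a * (if χ (a * b) then Pend U (fun t => if t * t = t then χ (a * t * b) else χ t)
          else 0) := by
  classical
  have hpush : ∀ e : {e : S // e * e = e},
      (if χ e.1 then U e.1 else 1 - U e.1) * U a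
        = U a * (if χ e.1 then U (b * e.1 * a) else 1 - U (b * e.1 * a)) := by
    intro e
    have habs : a * (b * e.1 * a) = e.1 * a := by
      calc a * (b * e.1 * a) = ((a * b) * e.1) * a := by simp only [mul_assoc]
        _ = (e.1 * (a * b)) * a := by rw [hc (a * b) e.1 (sand_ab hab) e.2]
        _ = e.1 * a := by rw [mul_assoc, hab]
    by_cases h : χ e.1
    · rw [if_pos h, if_pos h, ← hU, ← hU, habs]
    · rw [if_neg h, if_neg h, sub_mul, one_mul, mul_sub, mul_one, ← hU, ← hU, habs]
  have hmain : Pend U χ * U a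
      = U a * ((Finset.univ.toList.map (fun e : {e : S // e * e = e} =>
          if χ e.1 then U (b * e.1 * a) else 1 - U (b * e.1 * a))).prod) := by
    rw [Pend]
    exact list_prod_map_mul _ _ _ hpush _
  by_cases hx : χ (a * b)
  · rw [if_pos hx]
    have h1 := core U hU hc b a hba hab χ hm hx
    have haba : U a * U (b * a) = U a := by rw [← hU, ← mul_assoc, hab]
    have hcommute : U (b * a) * ((Finset.univ.toList.map (fun e : {e : S // e * e = e} =>
        if χ e.1 then U (b * e.1 * a) else 1 - U (b * e.1 * a))).prod)
        = ((Finset.univ.toList.map (fun e : {e : S // e * e = e} =>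
        if χ e.1 then U (b * e.1 * a) else 1 - U (b * e.1 * a))).prod) * U (b * a) := by
      refine Commute.list_prod_right _ (U (b * a)) ?_
      intro x hx'
      rw [List.mem_map] at hx'
      obtain ⟨e, _, rfl⟩ := hx'
      have hbea : (b * e.1 * a) * (b * e.1 * a) = b * e.1 * a :=
        sand_sigma (a := b) (b := a) hc hab e.2
      have hcom : Commute (U (b * a)) (U (b * e.1 * a)) := by
        show U (b * a) * U (b * e.1 * a) = U (b * e.1 * a) * U (b * a)
        rw [← hU, ← hU, hc (b * a) (b * e.1 * a) (sand_ba hba) hbea]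
      by_cases h : χ e.1
      · rw [if_pos h]; exact hcom
      · rw [if_neg h]; exact (Commute.one_right _).sub_right hcom
    have hΨba : (if (b * a) * (b * a) = b * a then χ (a * (b * a) * b) else χ (b * a)) = true := by
      rw [if_pos (sand_ba hba)]
      have h5 : a * (b * a) * b = (a * b) * (a * b) := by simp only [mul_assoc]
      rw [h5, hm (a * b) (a * b) (sand_ab hab) (sand_ab hab), hx, Bool.and_self]
    rw [hmain]
    calc U a * ((Finset.univ.toList.map (fun e : {e : S // e * e = e} =>
          if χ e.1 then U (b * e.1 * a) else 1 - U (b * e.1 * a))).prod)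
        = (U a * U (b * a)) * ((Finset.univ.toList.map (fun e : {e : S // e * e = e} =>
          if χ e.1 then U (b * e.1 * a) else 1 - U (b * e.1 * a))).prod) := by rw [haba]
      _ = U a * (U (b * a) * ((Finset.univ.toList.map (fun e : {e : S // e * e = e} =>
          if χ e.1 then U (b * e.1 * a) else 1 - U (b * e.1 * a))).prod)) := by rw [mul_assoc]
      _ = U a * (((Finset.univ.toList.map (fun e : {e : S // e * e = e} =>
          if χ e.1 then U (b * e.1 * a) else 1 - U (b * e.1 * a))).prod) * U (b * a)) := by
          rw [hcommute]
      _ = U a * (Pend U (fun t => if t * t = t then χ (a * t * b) else χ t) * U (b * a)) := by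
          rw [h1]
      _ = U a * Pend U (fun t => if t * t = t then χ (a * t * b) else χ t) := by
          rw [pend_mul_idem U hU hc _ (sand_ba hba), if_pos hΨba]
  · rw [if_neg hx, mul_zero]
    have h3 : U (a * b) * U a = U a := by rw [← hU, hab]
    calc Pend U χ * U a = Pend U χ * (U (a * b) * U a) := by rw [h3]
      _ = (Pend U χ * U (a * b)) * U a := by rw [mul_assoc]
      _ = (if χ (a * b) then Pend U χ else 0) * U a := by
          rw [pend_mul_idem U hU hc χ (sand_ab hab)]
      _ = 0 := by rw [if_neg hx, zero_mul]

end Push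

section Chars
variable {S : Type*} [Monoid S] [DecidableEq S]

lemma idem_mul_idem (hc : ∀ e f : S, e * e = e → f * f = f → e * f = f * e)
    {e f : S} (he : e * e = e) (hf : f * f = f) : (e * f) * (e * f) = e * f := by
  calc (e * f) * (e * f) = e * ((f * e) * f) := by simp only [mul_assoc]
    _ = e * ((e * f) * f) := by rw [hc f e hf he]
    _ = e * (e * (f * f)) := by simp only [mul_assoc]
    _ = e * (e * f) := by rw [hf]
    _ = (e * e) * f := by rw [← mul_assoc]
    _ = e * f := by rw [he]

variable {a b : S}

lemma sand_abs (hc : ∀ e f : S, e * e = e → f * f = f → e * f = f * e) (hab : a * b * a = a) {f : S} (hf : f * f = f) :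
    a * (b * f * a) = f * a := by
  calc a * (b * f * a) = ((a * b) * f) * a := by simp only [mul_assoc]
    _ = (f * (a * b)) * a := by rw [hc (a * b) f (sand_ab hab) hf]
    _ = f * a := by rw [mul_assoc, hab]

lemma sand_comb (hc : ∀ e f : S, e * e = e → f * f = f → e * f = f * e) (hab : a * b * a = a) {e f : S} (hf : f * f = f) :
    (b * e * a) * (b * f * a) = b * (e * f) * a := by
  have habs : a * (b * f * a) = f * a := sand_abs hc hab hf
  calc (b * e * a) * (b * f * a) = b * (e * (a * (b * f * a))) := by simp only [mul_assoc]
    _ = b * (e * (f * a)) := by rw [habs]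
    _ = b * (e * f) * a := by simp only [mul_assoc]

lemma phim_mult (hc : ∀ e f : S, e * e = e → f * f = f → e * f = f * e) (hab : a * b * a = a)
    (χ : S → Bool) (hm : ∀ e f : S, e * e = e → f * f = f → χ (e * f) = (χ e && χ f))
    {e f : S} (he : e * e = e) (hf : f * f = f) :
    (if (e * f) * (e * f) = e * f then χ (b * (e * f) * a) else χ (e * f))
      = ((if e * e = e then χ (b * e * a) else χ e)
          && (if f * f = f then χ (b * f * a) else χ f)) := by
  rw [if_pos (idem_mul_idem hc he hf), if_pos he, if_pos hf, ← sand_comb hc hab hf,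
    hm (b * e * a) (b * f * a) (sand_sigma (a := b) (b := a) hc hab he)
      (sand_sigma (a := b) (b := a) hc hab hf)]

lemma phim_one (χ : S → Bool) (hba1 : χ (b * a) = true) :
    (if (1 : S) * 1 = 1 then χ (b * 1 * a) else χ 1) = true := by
  rw [if_pos (one_mul (1 : S)), mul_one, hba1]

lemma phim_ab (hc : ∀ e f : S, e * e = e → f * f = f → e * f = f * e) (hab : a * b * a = a) (hba : b * a * b = b)
    (χ : S → Bool) (hm : ∀ e f : S, e * e = e → f * f = f → χ (e * f) = (χ e && χ f))
    (hba1 : χ (b * a) = true) :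
    (if (a * b) * (a * b) = a * b then χ (b * (a * b) * a) else χ (a * b)) = true := by
  rw [if_pos (sand_ab hab)]
  have h5 : b * (a * b) * a = (b * a) * (b * a) := by simp only [mul_assoc]
  rw [h5, hm (b * a) (b * a) (sand_ba hba) (sand_ba hba), hba1, Bool.and_self]

lemma psi_phi_pt (hc : ∀ e f : S, e * e = e → f * f = f → e * f = f * e) (hab : a * b * a = a) (hba : b * a * b = b)
    (χ : S → Bool) (hm : ∀ e f : S, e * e = e → f * f = f → χ (e * f) = (χ e && χ f))
    (hba1 : χ (b * a) = true) (t : S) :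
    (if t * t = t then
        (if (a * t * b) * (a * t * b) = a * t * b then χ (b * (a * t * b) * a) else χ (a * t * b))
      else (if t * t = t then χ (b * t * a) else χ t)) = χ t := by
  by_cases h : t * t = t
  · rw [if_pos h, if_pos (sand_sigma hc hba h), sand_tausigma hc hba h,
      hm t (b * a) h (sand_ba hba), hba1, Bool.and_true]
  · rw [if_neg h, if_neg h]

end Chars

lemma tensor_map_mul {𝓔 𝓕 : Type*} [AddCommGroup 𝓔] [Module ℂ 𝓔] [AddCommGroup 𝓕]
    [Module ℂ 𝓕] (f₂ f₁ : Module.End ℂ 𝓔) (g₂ g₁ : Module.End ℂ 𝓕) :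
    (TensorProduct.map f₂ g₂) * (TensorProduct.map f₁ g₁)
      = TensorProduct.map (f₂ * f₁) (g₂ * g₁) := by
  rw [Module.End.mul_eq_comp, ← TensorProduct.map_comp]
  rfl



/-- Let `S` be a finite unital inverse semigroup and let `U`, `V` be unital
`S`-actions by linear operators on `𝓔` and `𝓕` (as in `S`-Hilbert modules).  Then the
diagonal projection `𝔻 = ∑_{χ ∈ X} P_χ ⊗ P_χ` on the algebraic tensor product
`𝓔 ⊗ 𝓕` commutes with the diagonal operators `U_s ⊗ V_s` for every `s ∈ S`. -/
theorem Dop_commutes_with_diagonal_action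
    {S : Type*} [Monoid S] [Fintype S] [DecidableEq S] (inv : S → S)
    (h1 : ∀ s, s * inv s * s = s) (h2 : ∀ s, inv s * s * inv s = inv s)
    (huniq : ∀ s t, s * t * s = s → t * s * t = t → t = inv s)
    {𝓔 𝓕 : Type*} [AddCommGroup 𝓔] [Module ℂ 𝓔] [AddCommGroup 𝓕] [Module ℂ 𝓕]
    (U : S → Module.End ℂ 𝓔) (V : S → Module.End ℂ 𝓕)
    (hUmul : ∀ s t : S, U (s * t) = U s * U t) (hUone : U 1 = 1)
    (hVmul : ∀ s t : S, V (s * t) = V s * V t) (hVone : V 1 = 1)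
    (s : S) :
    (Dop U V).comp (TensorProduct.map (U s) (V s))
      = (TensorProduct.map (U s) (V s)).comp (Dop U V) := by
  classical
  have hc : ∀ e f : S, e * e = e → f * f = f → e * f = f * e :=
    fun e f he hf => idem_comm inv h1 h2 huniq he hf
  have hab : s * inv s * s = s := h1 s
  have hba : inv s * s * inv s = inv s := h2 s
  rw [← Module.End.mul_eq_comp, ← Module.End.mul_eq_comp]
  unfold Dop
  rw [Finset.sum_mul, Finset.mul_sum]
  simp only [tensor_map_mul]
  -- restrict the left sum to the characters with χ (s * inv s) = true
  have hL : ∑ χ : IdemChar S,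
      TensorProduct.map (Pend U χ.1 * U s) (Pend V χ.1 * V s)
      = ∑ χ ∈ Finset.univ.filter (fun μ : IdemChar S => μ.1 (s * inv s) = true),
        TensorProduct.map (Pend U χ.1 * U s) (Pend V χ.1 * V s) := by
    refine (Finset.sum_subset (Finset.filter_subset _ _) ?_).symm
    intro χ _ hnot
    have hx : ¬ (χ.1 (s * inv s) = true) := by
      intro h
      exact hnot (Finset.mem_filter.2 ⟨Finset.mem_univ _, h⟩)
    rw [key_push' U hUmul hc s (inv s) hab hba χ.1 χ.2.1, if_neg hx, mul_zero,
      TensorProduct.map_zero_left]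
  -- restrict the right sum to χ (inv s * s) = true and rewrite with key_push
  have hR0 : ∑ χ : IdemChar S,
      TensorProduct.map (U s * Pend U χ.1) (V s * Pend V χ.1)
      = ∑ χ ∈ Finset.univ.filter (fun μ : IdemChar S => μ.1 (inv s * s) = true),
        TensorProduct.map (U s * Pend U χ.1) (V s * Pend V χ.1) := by
    refine (Finset.sum_subset (Finset.filter_subset _ _) ?_).symm
    intro χ _ hnot
    have hx : ¬ (χ.1 (inv s * s) = true) := by
      intro h
      exact hnot (Finset.mem_filter.2 ⟨Finset.mem_univ _, h⟩)
    rw [key_push U hUmul hc s (inv s) hab hba χ.1 χ.2.1, if_neg hx, zero_mul,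
      TensorProduct.map_zero_left]
  have hR : ∑ χ ∈ Finset.univ.filter (fun μ : IdemChar S => μ.1 (inv s * s) = true),
      TensorProduct.map (U s * Pend U χ.1) (V s * Pend V χ.1)
      = ∑ χ ∈ Finset.univ.filter (fun μ : IdemChar S => μ.1 (inv s * s) = true),
        TensorProduct.map
          (Pend U (fun t => if t * t = t then χ.1 (inv s * t * s) else χ.1 t) * U s)
          (Pend V (fun t => if t * t = t then χ.1 (inv s * t * s) else χ.1 t) * V s) := by
    refine Finset.sum_congr rfl ?_
    intro χ hχ
    have hx : χ.1 (inv s * s) = true := (Finset.mem_filter.1 hχ).2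
    rw [key_push U hUmul hc s (inv s) hab hba χ.1 χ.2.1,
      key_push V hVmul hc s (inv s) hab hba χ.1 χ.2.1, if_pos hx, if_pos hx]
  rw [hL, hR0, hR]
  refine (Finset.sum_bij'
    (fun (μ : IdemChar S) (hμ : μ ∈ Finset.univ.filter
        (fun μ : IdemChar S => μ.1 (inv s * s) = true)) =>
      (⟨fun t => if t * t = t then μ.1 (inv s * t * s) else μ.1 t,
        fun e f he hf => phim_mult (a := s) (b := inv s) hc hab μ.1 μ.2.1 he hf,
        phim_one (a := s) (b := inv s) μ.1 (Finset.mem_filter.1 hμ).2⟩ : IdemChar S))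
    (fun (χ : IdemChar S) (hχ : χ ∈ Finset.univ.filter
        (fun μ : IdemChar S => μ.1 (s * inv s) = true)) =>
      (⟨fun t => if t * t = t then χ.1 (s * t * inv s) else χ.1 t,
        fun e f he hf => phim_mult (a := inv s) (b := s) hc hba χ.1 χ.2.1 he hf,
        phim_one (a := inv s) (b := s) χ.1 (Finset.mem_filter.1 hχ).2⟩ : IdemChar S))
    ?_ ?_ ?_ ?_ ?_).symm
  · intro μ hμ
    exact Finset.mem_filter.2 ⟨Finset.mem_univ _,
      phim_ab (a := s) (b := inv s) hc hab hba μ.1 μ.2.1 (Finset.mem_filter.1 hμ).2⟩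
  · intro χ hχ
    exact Finset.mem_filter.2 ⟨Finset.mem_univ _,
      phim_ab (a := inv s) (b := s) hc hba hab χ.1 χ.2.1 (Finset.mem_filter.1 hχ).2⟩
  · intro μ hμ
    exact Subtype.ext (funext fun t =>
      psi_phi_pt (a := s) (b := inv s) hc hab hba μ.1 μ.2.1 (Finset.mem_filter.1 hμ).2 t)
  · intro χ hχ
    exact Subtype.ext (funext fun t =>
      psi_phi_pt (a := inv s) (b := s) hc hba hab χ.1 χ.2.1 (Finset.mem_filter.1 hχ).2 t)
  · intro μ hμ
    rfl
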